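/- Let A be a Noetherian ring, R and R̃ flat A-algebras, and μ: R → R̃ an A-algebra homomorphism inducing an isomorphism R ⊗_A Q(A) ≅ R̃ ⊗_A Q(A). Then μ induces an isomorphism of total quotient rings Q(R) ≅ Q(R̃), and μ is birational (it induces a bijection between minimal primes of R and R̃ and isomorphisms of the corresponding localizations). -/

import Mathlib

set_option synthInstance.maxHeartbeats 1000000
set_option maxHeartbeats 1000000

open IsLocalization

attribute [local instance] Algebra.TensorProduct.rightAlgebra

lemma aux_disjoint {R : Type*} [CommRing R] {p : Ideal R} (hp : p ∈ minimalPrimes R)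
    {M : Submonoid R} (hM : M ≤ nonZeroDivisors R) : Disjoint (M : Set R) (p : Set R) := by
  haveI : p.IsPrime := hp.1.1
  rw [Set.disjoint_left]
  intro x hxM hxp
  have hnil : IsNilpotent (algebraMap R (Localization.AtPrime p) x) := by
    haveI : Ring.KrullDimLE 0 (Localization.AtPrime p) := .of_isLocalization _ hp _
    rw [Ring.KrullDimLE.isNilpotent_iff_mem_maximalIdeal]
    exact (IsLocalization.AtPrime.to_map_mem_maximal_iff _ p x).mpr hxp
  obtain ⟨n, hn⟩ := hnil
  rw [← map_pow, IsLocalization.map_eq_zero_iff p.primeCompl] at hn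
  obtain ⟨⟨t, ht⟩, h0⟩ := hn
  have hxn : x ^ n ∈ nonZeroDivisors R := pow_mem (hM hxM) n
  have : t = 0 := mem_nonZeroDivisors_iff_right.mp hxn t h0
  exact ht (this ▸ p.zero_mem)


lemma aux_bijOn {R S : Type*} [CommRing R] [CommRing S] [Algebra R S]
    (M : Submonoid R) [IsLocalization M S]
    (hdisj : ∀ p ∈ minimalPrimes R, Disjoint (M : Set R) (p : Set R)) :
    Set.BijOn (fun q => Ideal.comap (algebraMap R S) q) (minimalPrimes S) (minimalPrimes R) := by
  refine ⟨?_, ?_, ?_⟩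
  · -- MapsTo
    intro q hq
    haveI : q.IsPrime := hq.1.1
    refine ⟨⟨Ideal.IsPrime.comap _, bot_le⟩, ?_⟩
    intro b hb hble
    haveI : b.IsPrime := hb.1
    obtain ⟨p0, hp0min, hp0le⟩ := Ideal.exists_minimalPrimes_le (I := (⊥ : Ideal R))
      (J := b) bot_le
    have hp0disj := hdisj p0 hp0min
    haveI hp0p : p0.IsPrime := hp0min.1.1
    have hq0 : (Ideal.map (algebraMap R S) p0).IsPrime :=
      isPrime_of_isPrime_disjoint M S p0 hp0p hp0disj
    have hq0le : Ideal.map (algebraMap R S) p0 ≤ q :=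
      Ideal.map_le_iff_le_comap.mpr (hp0le.trans hble)
    have : q ≤ Ideal.map (algebraMap R S) p0 := hq.2 ⟨hq0, bot_le⟩ hq0le
    have hqeq : q = Ideal.map (algebraMap R S) p0 := le_antisymm this hq0le
    calc Ideal.comap (algebraMap R S) q
        = p0 := by rw [hqeq, (show
          Ideal.comap (algebraMap R S) (Ideal.map (algebraMap R S) p0) = p0 from
          comap_map_of_isPrime_disjoint M S hp0p hp0disj)]
      _ ≤ b := hp0le
  · -- InjOn
    intro q1 h1 q2 h2 he
    have := map_comap M S q1
    rw [← map_comap M S q1, ← map_comap M S q2]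
    simp only at he
    exact congrArg (Ideal.map (algebraMap R S)) he
  · -- SurjOn
    intro p hp
    haveI hpp : p.IsPrime := hp.1.1
    have hpd := hdisj p hp
    have hqP : (Ideal.map (algebraMap R S) p).IsPrime :=
      isPrime_of_isPrime_disjoint M S p hpp hpd
    have hqc : Ideal.comap (algebraMap R S) (Ideal.map (algebraMap R S) p) = p :=
      comap_map_of_isPrime_disjoint M S hpp hpd
    refine ⟨Ideal.map (algebraMap R S) p, ⟨⟨hqP, bot_le⟩, ?_⟩, hqc⟩
    intro b hb hble
    haveI : b.IsPrime := hb.1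
    have hcb : (Ideal.comap (algebraMap R S) b).IsPrime := Ideal.IsPrime.comap _
    have h1 : Ideal.comap (algebraMap R S) b ≤ p := hqc ▸ Ideal.comap_mono hble
    have h2 : p ≤ Ideal.comap (algebraMap R S) b := hp.2 ⟨hcb, bot_le⟩ h1
    have : Ideal.comap (algebraMap R S) b = p := le_antisymm h1 h2
    rw [← map_comap M S b]
    exact (congrArg (Ideal.map (algebraMap R S)) this).ge

lemma aux_atPrime_congr {R S : Type*} [CommRing R] [CommRing S] [Algebra R S]
    {p q : Ideal R} [hp : p.IsPrime] [hq : q.IsPrime] (h : p = q)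
    (H : IsLocalization.AtPrime S p) : IsLocalization.AtPrime S q := by
  subst h; exact H


theorem main_aux {R Rt : Type*} [CommRing R] [CommRing Rt]
    (μ : R →+* Rt) (M : Submonoid R) (N : Submonoid Rt)
    (hM : M ≤ nonZeroDivisors R) (hN : N ≤ nonZeroDivisors Rt)
    (ψ : Localization M ≃+* Localization N)
    (hψ : ∀ x, ψ (algebraMap R (Localization M) x) = algebraMap Rt (Localization N) (μ x)) :
    (∃ e : Localization (nonZeroDivisors R) ≃+* Localization (nonZeroDivisors Rt),
      (e : Localization (nonZeroDivisors R) →+* Localization (nonZeroDivisors Rt)).comp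
          (algebraMap R (Localization (nonZeroDivisors R))) =
        (algebraMap Rt (Localization (nonZeroDivisors Rt))).comp μ) ∧
    Set.BijOn (fun q => Ideal.comap μ q) (minimalPrimes Rt) (minimalPrimes R) ∧
    (∀ q : Ideal Rt, ∀ hq : q ∈ minimalPrimes Rt,
      let _ : q.IsPrime := hq.1.1
      let _ : (Ideal.comap μ q).IsPrime := Ideal.IsPrime.comap _
      Function.Bijective
        (Localization.localRingHom (Ideal.comap μ q) q μ rfl)) := by
  have hdisjR : ∀ p ∈ minimalPrimes R, Disjoint (M : Set R) (p : Set R) :=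
    fun p hp => aux_disjoint hp hM
  have hdisjRt : ∀ p ∈ minimalPrimes Rt, Disjoint (N : Set Rt) (p : Set Rt) :=
    fun p hp => aux_disjoint hp hN
  -- R-algebra structure on Localization N via μ
  letI : Algebra R (Localization N) := ((algebraMap Rt (Localization N)).comp μ).toAlgebra
  have halg : algebraMap R (Localization N) = (algebraMap Rt (Localization N)).comp μ := rfl
  letI ψA : Localization M ≃ₐ[R] Localization N :=
    { ψ with commutes' := fun r => hψ r }
  haveI hLocN : IsLocalization M (Localization N) :=
    IsLocalization.isLocalization_of_algEquiv M ψA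
  refine ⟨?_, ?_, ?_⟩
  · -- Part 1
    letI : Algebra (Localization M) (Localization (nonZeroDivisors R)) :=
      IsLocalization.localizationAlgebraOfSubmonoidLe _ _ M (nonZeroDivisors R) hM
    haveI towerR : IsScalarTower R (Localization M) (Localization (nonZeroDivisors R)) :=
      IsLocalization.localization_isScalarTower_of_submonoid_le _ _ M (nonZeroDivisors R) hM
    haveI fracM : IsFractionRing (Localization M) (Localization (nonZeroDivisors R)) :=
      IsFractionRing.isFractionRing_of_isLocalization M _ _ hM
    letI : Algebra (Localization N) (Localization (nonZeroDivisors Rt)) :=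
      IsLocalization.localizationAlgebraOfSubmonoidLe _ _ N (nonZeroDivisors Rt) hN
    haveI towerRt : IsScalarTower Rt (Localization N) (Localization (nonZeroDivisors Rt)) :=
      IsLocalization.localization_isScalarTower_of_submonoid_le _ _ N (nonZeroDivisors Rt) hN
    haveI fracN : IsFractionRing (Localization N) (Localization (nonZeroDivisors Rt)) :=
      IsFractionRing.isFractionRing_of_isLocalization N _ _ hN
    -- transfer fracM along ψ
    letI : Algebra (Localization N) (Localization (nonZeroDivisors R)) :=
      ((algebraMap (Localization M) (Localization (nonZeroDivisors R))).comp
        ψ.symm.toRingHom).toAlgebra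
    haveI fracN' : IsFractionRing (Localization N) (Localization (nonZeroDivisors R)) :=
      (IsFractionRing.isFractionRing_iff_of_base_ringEquiv
        (Localization (nonZeroDivisors R)) ψ).mp fracM
    letI e' := IsLocalization.algEquiv (nonZeroDivisors (Localization N))
      (Localization (nonZeroDivisors R)) (Localization (nonZeroDivisors Rt))
    have h2 : ∀ z, algebraMap (Localization M) (Localization (nonZeroDivisors R)) z =
        algebraMap (Localization N) (Localization (nonZeroDivisors R)) (ψ z) := by
      intro z
      show _ = ((algebraMap (Localization M) (Localization (nonZeroDivisors R))).comp
        ψ.symm.toRingHom) (ψ z)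
      rw [RingHom.comp_apply]
      simp
    refine ⟨e'.toRingEquiv, RingHom.ext fun x => ?_⟩
    show e' (algebraMap R (Localization (nonZeroDivisors R)) x) =
      algebraMap Rt (Localization (nonZeroDivisors Rt)) (μ x)
    rw [IsScalarTower.algebraMap_apply R (Localization M) (Localization (nonZeroDivisors R)),
      h2, hψ, e'.commutes, ← IsScalarTower.algebraMap_apply Rt (Localization N)
        (Localization (nonZeroDivisors Rt))]
  · -- Part 2
    have hB1 : Set.BijOn (fun Q => Ideal.comap (algebraMap Rt (Localization N)) Q)
        (minimalPrimes (Localization N)) (minimalPrimes Rt) := aux_bijOn N hdisjRt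
    have hB2 : Set.BijOn (fun Q => Ideal.comap (algebraMap R (Localization N)) Q)
        (minimalPrimes (Localization N)) (minimalPrimes R) := aux_bijOn M hdisjR
    have hmapsTo : Set.MapsTo (fun q => Ideal.map (algebraMap Rt (Localization N)) q)
        (minimalPrimes Rt) (minimalPrimes (Localization N)) := by
      intro q hq
      obtain ⟨Q, hQ, hQc⟩ := hB1.2.2 hq
      simp only at hQc
      show Ideal.map (algebraMap Rt (Localization N)) q ∈ minimalPrimes (Localization N)
      have : Ideal.map (algebraMap Rt (Localization N)) q = Q := by
        rw [← hQc, map_comap N]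
      rwa [this]
    have hInv : Set.InvOn (fun Q => Ideal.comap (algebraMap Rt (Localization N)) Q)
        (fun q => Ideal.map (algebraMap Rt (Localization N)) q)
        (minimalPrimes Rt) (minimalPrimes (Localization N)) := by
      constructor
      · intro q hq
        haveI : q.IsPrime := hq.1.1
        exact comap_map_of_isPrime_disjoint N _ ‹_› (hdisjRt q hq)
      · intro Q hQ
        exact map_comap N _ Q
    have hB1inv : Set.BijOn (fun q => Ideal.map (algebraMap Rt (Localization N)) q)
        (minimalPrimes Rt) (minimalPrimes (Localization N)) :=
      hInv.bijOn hmapsTo hB1.1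
    have hcomp := hB2.comp hB1inv
    refine hcomp.congr ?_
    intro q hq
    haveI hqP : q.IsPrime := hq.1.1
    show Ideal.comap (algebraMap R (Localization N))
      (Ideal.map (algebraMap Rt (Localization N)) q) = Ideal.comap μ q
    rw [halg, ← Ideal.comap_comap,
      (show
        Ideal.comap (algebraMap Rt (Localization N)) (Ideal.map (algebraMap Rt (Localization N)) q) = q from
        comap_map_of_isPrime_disjoint N _ hqP (hdisjRt q hq))]
  · -- Part 3
    intro q hq
    haveI hqP : q.IsPrime := hq.1.1
    haveI hpP : (Ideal.comap μ q).IsPrime := Ideal.IsPrime.comap _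
    set p := Ideal.comap μ q with hp
    show Function.Bijective (Localization.localRingHom p q μ rfl)
    set Q : Ideal (Localization N) := Ideal.map (algebraMap Rt (Localization N)) q with hQdef
    haveI hQP : Q.IsPrime := isPrime_of_isPrime_disjoint N _ q hqP (hdisjRt q hq)
    have hQc : Ideal.comap (algebraMap Rt (Localization N)) Q = q :=
      comap_map_of_isPrime_disjoint N _ hqP (hdisjRt q hq)
    have hQcR : Ideal.comap (algebraMap R (Localization N)) Q = p := by
      rw [halg, ← Ideal.comap_comap, hQc]
    haveI hTq : IsLocalization.AtPrime (Localization.AtPrime Q) q :=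
      aux_atPrime_congr hQc
        (IsLocalization.isLocalization_atPrime_localization_atPrime N Q)
    haveI : IsScalarTower R (Localization N) (Localization.AtPrime Q) :=
      IsScalarTower.of_algebraMap_eq' rfl
    haveI hTp : IsLocalization.AtPrime (Localization.AtPrime Q) p :=
      aux_atPrime_congr hQcR
        (IsLocalization.isLocalization_isLocalization_atPrime_isLocalization M
          (Localization.AtPrime Q) (p := Q))
    letI eqv : Localization.AtPrime q ≃ₐ[Rt] Localization.AtPrime Q :=
      IsLocalization.algEquiv q.primeCompl _ _
    letI : Algebra R (Localization.AtPrime q) :=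
      ((algebraMap Rt (Localization.AtPrime q)).comp μ).toAlgebra
    letI eqv2 : Localization.AtPrime Q ≃ₐ[R] Localization.AtPrime q := by
      refine AlgEquiv.ofRingEquiv (f := eqv.symm.toRingEquiv) ?_
      intro r
      rw [IsScalarTower.algebraMap_apply R (Localization N) (Localization.AtPrime Q), halg,
        RingHom.comp_apply, ← IsScalarTower.algebraMap_apply Rt (Localization N)
          (Localization.AtPrime Q)]
      exact eqv.symm.commutes (μ r)
    haveI hfin : IsLocalization.AtPrime (Localization.AtPrime q) p :=
      IsLocalization.isLocalization_of_algEquiv p.primeCompl eqv2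
    letI ε := IsLocalization.algEquiv p.primeCompl (Localization.AtPrime p)
      (Localization.AtPrime q)
    have heq : Localization.localRingHom p q μ rfl = ε.toAlgHom.toRingHom := by
      apply IsLocalization.ringHom_ext p.primeCompl
      ext x
      show Localization.localRingHom p q μ rfl (algebraMap R (Localization.AtPrime p) x) =
        ε (algebraMap R (Localization.AtPrime p) x)
      rw [Localization.localRingHom_to_map, ε.commutes]
      rfl
    rw [heq]
    exact ε.bijective

lemma aux_flat_nzd {A R : Type*} [CommRing A] [CommRing R] [Algebra A R] [Module.Flat A R] :
    Algebra.algebraMapSubmonoid R (nonZeroDivisors A) ≤ nonZeroDivisors R := by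
  rintro _ ⟨a, ha, rfl⟩
  have hreg : IsSMulRegular A a := by
    intro x y hxy
    have h0 : (x - y) * a = 0 := by
      simp only [smul_eq_mul] at hxy
      rw [sub_mul, mul_comm x a, mul_comm y a, hxy, sub_self]
    exact sub_eq_zero.mp (mem_nonZeroDivisors_iff_right.mp ha (x - y) h0)
  have hregT : IsSMulRegular (TensorProduct A R A) a := hreg.lTensor R
  have hregR : IsSMulRegular R a := by
    intro x y hxy
    have e := TensorProduct.rid A R
    simp only at hxy
    have : a • e.symm x = a • e.symm y := by
      rw [← map_smul, ← map_smul, hxy]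
    exact e.symm.injective (hregT this)
  rw [mem_nonZeroDivisors_iff_right]
  intro x hx
  have : a • x = a • 0 := by
    rw [smul_zero, Algebra.smul_def, mul_comm]
    exact hx
  exact hregR this


/-- Let `A` be Noetherian, `R`, `R̃` flat `A`-algebras and `μ : R → R̃` an `A`-algebra map
inducing an isomorphism `R ⊗_A Q(A) ≅ R̃ ⊗_A Q(A)`. Then `μ` induces an isomorphism of
total quotient rings `Q(R) ≅ Q(R̃)`, and `μ` is birational: it induces a bijection between
the minimal primes of `R̃` and of `R` together with isomorphisms of the corresponding
localizations. -/
theorem stmt13 (A R Rt : Type*) [CommRing A] [IsNoetherianRing A]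
    [CommRing R] [IsNoetherianRing R] [CommRing Rt] [IsNoetherianRing Rt]
    [Algebra A R] [Algebra A Rt] [Module.Flat A R] [Module.Flat A Rt]
    (μ : R →ₐ[A] Rt)
    (hbij : Function.Bijective
      (Algebra.TensorProduct.map μ (AlgHom.id A (Localization (nonZeroDivisors A))))) :
    (∃ e : Localization (nonZeroDivisors R) ≃+* Localization (nonZeroDivisors Rt),
      (e : Localization (nonZeroDivisors R) →+* Localization (nonZeroDivisors Rt)).comp
          (algebraMap R (Localization (nonZeroDivisors R))) =
        (algebraMap Rt (Localization (nonZeroDivisors Rt))).comp μ.toRingHom) ∧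
    Set.BijOn (fun q => Ideal.comap μ.toRingHom q) (minimalPrimes Rt) (minimalPrimes R) ∧
    (∀ q : Ideal Rt, ∀ hq : q ∈ minimalPrimes Rt,
      let _ : q.IsPrime := hq.1.1
      let _ : (Ideal.comap μ.toRingHom q).IsPrime := Ideal.IsPrime.comap _
      Function.Bijective
        (Localization.localRingHom (Ideal.comap μ.toRingHom q) q μ.toRingHom rfl)) := by
  set K := Localization (nonZeroDivisors A) with hK
  set M := Algebra.algebraMapSubmonoid R (nonZeroDivisors A) with hM
  set N := Algebra.algebraMapSubmonoid Rt (nonZeroDivisors A) with hN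
  have hMle : M ≤ nonZeroDivisors R := aux_flat_nzd
  have hNle : N ≤ nonZeroDivisors Rt := aux_flat_nzd
  haveI locR : IsLocalization M (TensorProduct A R K) := by
    have h1 : IsLocalizedModule (nonZeroDivisors A)
        (IsScalarTower.toAlgHom A R (TensorProduct A R K)).toLinearMap :=
      (isLocalizedModule_iff_isBaseChange (nonZeroDivisors A) K _).mpr
        (inferInstance : Algebra.IsPushout A K R (TensorProduct A R K)).1
    exact isLocalizedModule_iff_isLocalization.mp h1
  haveI locRt : IsLocalization N (TensorProduct A Rt K) := by
    have h1 : IsLocalizedModule (nonZeroDivisors A)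
        (IsScalarTower.toAlgHom A Rt (TensorProduct A Rt K)).toLinearMap :=
      (isLocalizedModule_iff_isBaseChange (nonZeroDivisors A) K _).mpr
        (inferInstance : Algebra.IsPushout A K Rt (TensorProduct A Rt K)).1
    exact isLocalizedModule_iff_isLocalization.mp h1
  letI e0 : TensorProduct A R K ≃+* TensorProduct A Rt K :=
    RingEquiv.ofBijective (Algebra.TensorProduct.map μ (AlgHom.id A K)) hbij
  letI a1 := IsLocalization.algEquiv M (Localization M) (TensorProduct A R K)
  letI a2 := IsLocalization.algEquiv N (TensorProduct A Rt K) (Localization N)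
  letI ψ : Localization M ≃+* Localization N :=
    a1.toRingEquiv.trans (e0.trans a2.toRingEquiv)
  have hψ : ∀ x, ψ (algebraMap R (Localization M) x) =
      algebraMap Rt (Localization N) (μ x) := by
    intro x
    show a2 (e0 (a1 (algebraMap R (Localization M) x))) = _
    rw [a1.commutes]
    have h2 : e0 (algebraMap R (TensorProduct A R K) x) =
        algebraMap Rt (TensorProduct A Rt K) (μ x) := by
      show (Algebra.TensorProduct.map μ (AlgHom.id A K))
        (algebraMap R (TensorProduct A R K) x) = _
      simp [Algebra.TensorProduct.algebraMap_apply]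
    rw [h2, a2.commutes]
  exact main_aux μ.toRingHom M N hMle hNle ψ hψ
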